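/- Let f : [0,η] → ℝ be C¹ with 0 < f ≤ C and f' ≤ -η on [0,η], for some C ≥ 1/2 and η > 0. Assume φ(x) = e^{x²} f(x) is strictly convex on [0,η]. Then b₁ := argmin_{[0,η]} φ satisfies b₁ ≥ η/(2C), and hence f(0) - f(b₁) ≥ η²/(2C). -/

import Mathlib

open Real Set

/-- Let `f : [0,η] → ℝ` be `C¹` with `0 < f ≤ C` and `f' ≤ -η` on
`[0,η]`, `C ≥ 1/2`, `η > 0`. If `φ(x) = e^{x²} f(x)` is strictly convex on `[0,η]`,
then `b₁ := argmin_{[0,η]} φ` satisfies `b₁ ≥ η/(2C)`; hence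
`f(0) - f(b₁) ≥ η²/(2C)`. -/
theorem stmt18 (η C : ℝ) (hη : 0 < η) (hC : (1 : ℝ) / 2 ≤ C)
    (f : ℝ → ℝ) (hf : ContDiffOn ℝ 1 f (Set.Icc 0 η))
    (hfpos : ∀ x ∈ Set.Icc 0 η, 0 < f x) (hfC : ∀ x ∈ Set.Icc 0 η, f x ≤ C)
    (hf' : ∀ x ∈ Set.Icc 0 η, deriv f x ≤ -η)
    (hconv : StrictConvexOn ℝ (Set.Icc 0 η) (fun x => Real.exp (x ^ 2) * f x))
    (b₁ : ℝ) (hb₁ : b₁ ∈ Set.Icc 0 η)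
    (hmin : ∀ x ∈ Set.Icc 0 η,
      Real.exp (b₁ ^ 2) * f b₁ ≤ Real.exp (x ^ 2) * f x) :
    η / (2 * C) ≤ b₁ ∧ η ^ 2 / (2 * C) ≤ f 0 - f b₁ := by
  have hC2 : (0:ℝ) < 2 * C := by linarith
  have hb : η / (2 * C) ≤ η := by
    rw [div_le_iff₀ hC2]; nlinarith
  have hfc : ContinuousOn f (Set.Icc 0 η) := hf.continuousOn
  have hdiff : ∀ x ∈ Set.Ioo 0 η, DifferentiableAt ℝ f x := by
    intro x hx
    have h1 := (hf.differentiableOn one_ne_zero) x (Ioo_subset_Icc_self hx)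
    exact h1.differentiableAt (Icc_mem_nhds hx.1 hx.2)
  have key : η / (2 * C) ≤ b₁ := by
    by_contra h
    push_neg at h
    set b := η / (2 * C) with hbdef
    have hb0 : 0 < b := div_pos hη hC2
    have hanti : StrictAntiOn (fun x => Real.exp (x ^ 2) * f x) (Set.Icc 0 b) := by
      apply strictAntiOn_of_deriv_neg (convex_Icc 0 b)
      · exact ((Real.continuous_exp.comp (continuous_pow 2)).continuousOn).mul
          (hfc.mono (Icc_subset_Icc le_rfl hb))
      · intro x hx
        rw [interior_Icc] at hx
        have hxη : x ∈ Set.Ioo 0 η := ⟨hx.1, lt_of_lt_of_le hx.2 hb⟩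
        have hdf := hdiff x hxη
        have h1 : HasDerivAt (fun y => Real.exp (y ^ 2)) (Real.exp (x ^ 2) * (2 * x)) x := by
          have := (Real.hasDerivAt_exp (x ^ 2)).comp x (hasDerivAt_pow 2 x)
          simpa [mul_comm, Function.comp_def] using this
        have h2 : HasDerivAt (fun y => Real.exp (y ^ 2) * f y)
            (Real.exp (x ^ 2) * (2 * x) * f x + Real.exp (x ^ 2) * deriv f x) x :=
          h1.mul hdf.hasDerivAt
        rw [h2.deriv]
        have hxI : x ∈ Set.Icc 0 η := ⟨hxη.1.le, hxη.2.le⟩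
        have hfx := hfpos x hxI
        have hfxC := hfC x hxI
        have hdfx := hf' x hxI
        have hexp : 0 < Real.exp (x ^ 2) := Real.exp_pos _
        have h2x : 2 * x * C < η := by
          have hxb : x < b := hx.2
          rw [hbdef, lt_div_iff₀ hC2] at hxb
          nlinarith
        have h2x0 : (0:ℝ) ≤ Real.exp (x ^ 2) * (2 * x) := by
          have := hxη.1
          positivity
        nlinarith [mul_pos hexp hfx, mul_le_mul_of_nonneg_left hfxC h2x0, mul_le_mul_of_nonneg_left hdfx hexp.le]
    have hbI : b ∈ Set.Icc 0 η := ⟨hb0.le, hb⟩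
    have hlt := hanti ⟨hb₁.1, h.le⟩ ⟨hb0.le, le_rfl⟩ h
    exact absurd (hmin b hbI) (not_le.mpr hlt)
  refine ⟨key, ?_⟩
  have hg : AntitoneOn (fun x => f x + η * x) (Set.Icc 0 η) := by
    apply antitoneOn_of_deriv_nonpos (convex_Icc 0 η)
    · exact hfc.add (continuousOn_const.mul continuousOn_id)
    · intro x hx
      rw [interior_Icc] at hx
      exact ((hdiff x hx).add ((differentiableAt_id.const_mul η))).differentiableWithinAt
    · intro x hx
      rw [interior_Icc] at hx
      have hd : deriv (fun x => f x + η * x) x = deriv f x + η := by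
        rw [deriv_fun_add (hdiff x hx) (by fun_prop)]
        have : deriv (HMul.hMul η) x = η := by
          have := ((hasDerivAt_id x).const_mul η).deriv
          simpa using this
        rw [this]
      rw [hd]
      have := hf' x ⟨hx.1.le, hx.2.le⟩
      linarith
  have hmono := hg (left_mem_Icc.mpr hη.le) hb₁ hb₁.1
  have h0 : f b₁ + η * b₁ ≤ f 0 := by simpa using hmono
  have hηb : η ^ 2 / (2 * C) ≤ η * b₁ := by
    rw [div_le_iff₀ hC2]
    have hb1' : η ≤ b₁ * (2 * C) := by
      rwa [div_le_iff₀ hC2] at key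
    nlinarith
  linarith
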